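/- arXiv:1811.09530 — 5 statements merged into one kernel-verified Lean document; each statement's English description precedes it below -/
import Mathlib

section
/- Let P be an ideal of K[X_1,...,X_n] and u ⊆ {X_1,...,X_n} a maximal independent set with respect to P (i.e., P ∩ K[u] = 0 and |u| = dim K[X]/P). Then P is prime if and only if the extension P·K(u)[X∖u] is a maximal ideal of K(u)[X∖u] and P equals the contraction P·K(u)[X∖u] ∩ K[X]. -/
open MvPolynomial

/-- For a subset `u` of the variables, the multiplicative set `S = K[u] ∖ {0}` of nonzero
polynomials involving only the variables in `u`; the localization of `K[X]` at `S` is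
`K(u)[X∖u]`. -/
def suppSubmonoid {K : Type*} [Field K] {n : ℕ} (u : Finset (Fin n)) :
    Submonoid (MvPolynomial (Fin n) K) where
  carrier := {p | p ∈ MvPolynomial.supported K (↑u : Set (Fin n)) ∧ p ≠ 0}
  one_mem' := ⟨one_mem _, one_ne_zero⟩
  mul_mem' := fun ha hb => ⟨mul_mem ha.1 hb.1, mul_ne_zero ha.2 hb.2⟩

set_option maxHeartbeats 1000000
set_option synthInstance.maxHeartbeats 400000

section Auxiliary

open Order

universe v

/-- If `n` is at most the Krull dimension of a preorder, there is a strict chain of length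
at least `n`. -/
lemma my_exists_ltSeries {α : Type*} [Preorder α] {n : ℕ}
    (h : (n : WithBot ℕ∞) ≤ Order.krullDim α) : ∃ p : LTSeries α, n ≤ p.length := by
  have hne : Nonempty α := by
    by_contra he
    simp only [not_nonempty_iff] at he
    rw [Order.krullDim_eq_bot] at h
    exact absurd h (by simp)
  by_contra hc
  push_neg at hc
  have hn1 : 1 ≤ n := by
    have := hc (RelSeries.singleton _ hne.some)
    simp at this; omega
  have hle : Order.krullDim α ≤ ((n - 1 : ℕ) : WithBot ℕ∞) := by
    rw [Order.krullDim_eq_iSup_length]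
    have : (⨆ p : LTSeries α, (p.length : ℕ∞)) ≤ ((n-1 : ℕ) : ℕ∞) := by
      refine iSup_le fun p => ?_
      exact_mod_cast Nat.le_sub_one_of_lt (hc p)
    rw [show ((n - 1 : ℕ) : WithBot ℕ∞) = ((((n-1):ℕ) : ℕ∞) : WithBot ℕ∞) by norm_cast]
    exact WithBot.coe_le_coe.mpr this
  have h2 : (n : WithBot ℕ∞) ≤ ((n - 1 : ℕ) : WithBot ℕ∞) := h.trans hle
  have : n ≤ n - 1 := by exact_mod_cast h2
  omega

/-- If `S` is a quotient of a domain `R` by a nonzero kernel, then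
`dim S + 1 ≤ dim R`. -/
lemma my_dim_succ_le {R S : Type*} [CommRing R] [IsDomain R] [CommRing S]
    (f : R →+* S) (hf : Function.Surjective f) (hker : RingHom.ker f ≠ ⊥) {d : ℕ}
    (hd : (d : WithBot ℕ∞) ≤ ringKrullDim S) :
    ((d + 1 : ℕ) : WithBot ℕ∞) ≤ ringKrullDim R := by
  obtain ⟨p, hp⟩ := my_exists_ltSeries hd
  let g : PrimeSpectrum S → PrimeSpectrum R := fun J => ⟨J.asIdeal.comap f, inferInstance⟩
  have hg : StrictMono g := by
    have hmono : Monotone g := fun a b hab => Ideal.comap_mono hab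
    refine hmono.strictMono_of_injective fun a b hab => ?_
    exact PrimeSpectrum.ext
      (Ideal.comap_injective_of_surjective f hf (congrArg PrimeSpectrum.asIdeal hab))
  let q := LTSeries.map p g hg
  have hbot : (⟨⊥, Ideal.bot_prime⟩ : PrimeSpectrum R) < q.head := by
    rw [← PrimeSpectrum.asIdeal_lt_asIdeal]
    refine bot_lt_iff_ne_bot.mpr fun h0 => hker ?_
    have : RingHom.ker f ≤ q.head.asIdeal := by
      show RingHom.ker f ≤ (p.head.asIdeal).comap f
      exact fun x hx => by
        simp only [Ideal.mem_comap]
        rw [RingHom.mem_ker] at hx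
        rw [hx]
        exact (p.head.asIdeal).zero_mem
    rw [h0] at this
    exact le_bot_iff.mp this
  let q' := q.cons ⟨⊥, Ideal.bot_prime⟩ hbot
  have hlen : (q'.length : WithBot ℕ∞) ≤ ringKrullDim R := LTSeries.length_le_krullDim q'
  refine le_trans ?_ hlen
  have : d + 1 ≤ q'.length := by
    have hql : q'.length = q.length + 1 := by simp [q', RelSeries.cons_length]
    have hq : q.length = p.length := rfl
    omega
  exact_mod_cast this

/-- If `a` is transcendental over a subalgebra `R₀` of a finitely generated domain `A` over a
field `K`, then there is a nonzero prime of `A` avoiding the nonzero elements of `R₀`.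
This is proved by localizing `A` at the nonzero elements of `R₀`, obtaining a finitely
generated algebra over the fraction field of `R₀`, which cannot be a field by Zariski's lemma
since `a` is transcendental. -/
lemma exists_prime_of_transcendental {K A : Type*} [Field K] [CommRing A] [IsDomain A]
    [Algebra K A] [Algebra.FiniteType K A] (R₀ : Subalgebra K A) (a : A)
    (htrans : Transcendental (↥R₀) a) :
    ∃ p : Ideal A, p.IsPrime ∧ p ≠ ⊥ ∧ ∀ r ∈ R₀, r ∈ p → r = 0 := by
  classical
  let T : Submonoid A :=
    { carrier := {b | b ∈ R₀ ∧ b ≠ 0}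
      one_mem' := ⟨one_mem _, one_ne_zero⟩
      mul_mem' := fun ha hb => ⟨mul_mem ha.1 hb.1, mul_ne_zero ha.2 hb.2⟩ }
  have hT : T ≤ nonZeroDivisors A := fun b hb => mem_nonZeroDivisors_of_ne_zero hb.2
  let B := Localization T
  haveI : IsDomain B := IsLocalization.isDomain_localization hT
  have hinjAB : Function.Injective (algebraMap A B) := IsLocalization.injective B hT
  let F := FractionRing ↥R₀
  have hunit : ∀ y : nonZeroDivisors ↥R₀, IsUnit ((algebraMap ↥R₀ B) (y : ↥R₀)) := by
    intro y
    have hy0 : ((y : ↥R₀) : A) ≠ 0 := by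
      have hne : (y : ↥R₀) ≠ 0 := nonZeroDivisors.coe_ne_zero y
      exact fun h => hne (Subtype.ext (by simpa using h))
    have hmem : ((y : ↥R₀) : A) ∈ T := ⟨(y : ↥R₀).2, hy0⟩
    have h1 := IsLocalization.map_units B (⟨_, hmem⟩ : T)
    rwa [IsScalarTower.algebraMap_apply ↥R₀ A B]
  letI : Algebra F B := (IsLocalization.lift (S := F) hunit).toAlgebra
  haveI : IsScalarTower ↥R₀ F B :=
    IsScalarTower.of_algebraMap_eq fun r => (IsLocalization.lift_eq hunit r).symm
  have hnotfield : ¬ IsField B := by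
    intro hfield
    letI : Field B := hfield.toField
    haveI hFT : Algebra.FiniteType F B := by
      obtain ⟨s, hs⟩ := (Algebra.FiniteType.out (R := K) (A := A))
      refine ⟨⟨s.image (algebraMap A B), ?_⟩⟩
      rw [eq_top_iff]
      rintro b -
      set C := Algebra.adjoin F (↑(s.image (algebraMap A B)) : Set B) with hC
      show b ∈ C
      obtain ⟨⟨c, t⟩, rfl⟩ := IsLocalization.mk'_surjective T b
      obtain ⟨tv, htv⟩ := t
      set t₀ : ↥R₀ := ⟨tv, htv.1⟩ with ht₀
      have ht₀0 : (algebraMap ↥R₀ F) t₀ ≠ 0 := by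
        rw [map_ne_zero_iff _ (IsFractionRing.injective ↥R₀ F)]
        exact fun h => htv.2 (by simpa [ht₀] using congrArg Subtype.val h)
      have h2 : algebraMap A B tv = algebraMap F B (algebraMap ↥R₀ F t₀) := by
        rw [← IsScalarTower.algebraMap_apply ↥R₀ F B t₀,
          IsScalarTower.algebraMap_apply ↥R₀ A B t₀]
        rfl
      have hmk : IsLocalization.mk' B c (⟨tv, htv⟩ : T)
          = algebraMap F B ((algebraMap ↥R₀ F t₀)⁻¹) * algebraMap A B c := by
        have h1 : IsLocalization.mk' B c (⟨tv, htv⟩ : T) * algebraMap A B tv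
            = algebraMap A B c := IsLocalization.mk'_spec B c ⟨tv, htv⟩
        have h3 : algebraMap F B ((algebraMap ↥R₀ F t₀)⁻¹) * algebraMap A B tv = 1 := by
          rw [h2, ← map_mul, inv_mul_cancel₀ ht₀0, map_one]
        calc IsLocalization.mk' B c (⟨tv, htv⟩ : T)
            = IsLocalization.mk' B c (⟨tv, htv⟩ : T) *
              (algebraMap F B ((algebraMap ↥R₀ F t₀)⁻¹) * algebraMap A B tv) := by
              rw [h3, mul_one]
          _ = algebraMap F B ((algebraMap ↥R₀ F t₀)⁻¹) *
              (IsLocalization.mk' B c (⟨tv, htv⟩ : T) * algebraMap A B tv) := by ring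
          _ = algebraMap F B ((algebraMap ↥R₀ F t₀)⁻¹) * algebraMap A B c := by rw [h1]
      show IsLocalization.mk' B c (⟨tv, htv⟩ : T) ∈ C
      rw [hmk]
      refine mul_mem (C.algebraMap_mem _) ?_
      let D : Subalgebra K A :=
        { carrier := {z | algebraMap A B z ∈ C}
          one_mem' := by show algebraMap A B 1 ∈ C; rw [map_one]; exact one_mem C
          mul_mem' := fun {z w} hz hw => by
            show algebraMap A B (z * w) ∈ C
            rw [map_mul]; exact mul_mem hz hw
          add_mem' := fun {z w} hz hw => by
            show algebraMap A B (z + w) ∈ C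
            rw [map_add]; exact add_mem hz hw
          zero_mem' := by show algebraMap A B 0 ∈ C; rw [map_zero]; exact zero_mem C
          algebraMap_mem' := fun k => by
            show algebraMap A B (algebraMap K A k) ∈ C
            rw [IsScalarTower.algebraMap_apply K ↥R₀ A k,
              ← IsScalarTower.algebraMap_apply ↥R₀ A B,
              IsScalarTower.algebraMap_apply ↥R₀ F B]
            exact C.algebraMap_mem _ }
      have hsD : Algebra.adjoin K (↑s : Set A) ≤ D := by
        rw [Algebra.adjoin_le_iff]
        intro a' ha'
        show algebraMap A B a' ∈ C
        exact Algebra.subset_adjoin (Finset.mem_image_of_mem _ ha')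
      rw [hs] at hsD
      exact hsD (by trivial)
    haveI : Module.Finite F B := finite_of_finite_type_of_isJacobsonRing F B
    haveI : Algebra.IsAlgebraic F B := Algebra.IsAlgebraic.of_finite F B
    have halg : IsAlgebraic ↥R₀ (algebraMap A B a) :=
      (IsFractionRing.isAlgebraic_iff ↥R₀ F B).mpr (Algebra.IsAlgebraic.isAlgebraic _)
    obtain ⟨p, hp0, hpeval⟩ := halg
    refine htrans ⟨p, hp0, ?_⟩
    apply hinjAB
    rw [map_zero, ← hpeval]
    exact (Polynomial.aeval_algHom_apply (IsScalarTower.toAlgHom ↥R₀ A B) a p).symm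
  obtain ⟨m, hm0, hmp⟩ := Ring.not_isField_iff_exists_prime.mp hnotfield
  haveI := hmp
  refine ⟨m.comap (algebraMap A B), Ideal.IsPrime.comap _, ?_, ?_⟩
  · exact bot_lt_iff_ne_bot.mp (IsLocalization.bot_lt_comap_prime T B hT m hm0)
  · intro r hr hrp
    by_contra hne
    have hdisj : Disjoint (T : Set A) ((m.comap (algebraMap A B) : Ideal A) : Set A) :=
      ((IsLocalization.isPrime_iff_isPrime_disjoint T B m).mp hmp).2
    exact Set.disjoint_left.mp hdisj (⟨hr, hne⟩ : r ∈ T) hrp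

/-- In a finitely generated domain over a field, the Krull dimension is at least the size of
any algebraically independent family.  (This is the "dimension ≥ transcendence degree"
inequality, proved by induction.) -/
lemma le_ringKrullDim_of_algIndep {K : Type*} [Field K] (d : ℕ) :
    ∀ {A : Type v} [CommRing A] [IsDomain A] [Algebra K A] [Algebra.FiniteType K A]
      (x : Fin d → A), AlgebraicIndependent K x → (d : WithBot ℕ∞) ≤ ringKrullDim A := by
  induction d with
  | zero =>
    intro A _ _ _ _ x hx
    simpa using ringKrullDim_nonneg_of_nontrivial
  | succ d IH =>
    intro A _ _ _ _ x hx
    classical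
    have hx' : AlgebraicIndependent K (x ∘ Fin.succ) := hx.comp Fin.succ (Fin.succ_injective d)
    have htrans : Transcendental (↥(Algebra.adjoin K (Set.range (x ∘ Fin.succ)))) (x 0) := by
      rw [← hx'.option_iff_transcendental (x 0)]
      have h2 := hx.comp (finSuccEquiv d).symm (Equiv.injective _)
      convert h2 using 1
      funext o
      cases o with
      | none => simp
      | some i => simp
    obtain ⟨pA, hpAp, hpA0, hpAdisj⟩ :=
      exists_prime_of_transcendental (Algebra.adjoin K (Set.range (x ∘ Fin.succ))) (x 0) htrans
    haveI := hpAp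
    haveI : Algebra.FiniteType K (A ⧸ pA) :=
      Algebra.FiniteType.of_surjective (Ideal.Quotient.mkₐ K pA)
        (Ideal.Quotient.mkₐ_surjective K pA)
    have hy : AlgebraicIndependent K (fun i => Ideal.Quotient.mk pA ((x ∘ Fin.succ) i)) := by
      rw [algebraicIndependent_iff]
      intro f hf
      have h1 : aeval (x ∘ Fin.succ) f ∈ pA := by
        have hcomm : aeval (fun i => Ideal.Quotient.mk pA ((x ∘ Fin.succ) i)) f
            = Ideal.Quotient.mkₐ K pA (aeval (x ∘ Fin.succ) f) := by
          rw [MvPolynomial.comp_aeval_apply]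
          rfl
        rw [hcomm] at hf
        exact Ideal.Quotient.eq_zero_iff_mem.mp hf
      have h2 : aeval (x ∘ Fin.succ) f ∈ Algebra.adjoin K (Set.range (x ∘ Fin.succ)) := by
        rw [Algebra.adjoin_range_eq_range_aeval]
        exact ⟨f, rfl⟩
      exact (algebraicIndependent_iff.mp hx') f (hpAdisj _ h2 h1)
    have hdle : (d : WithBot ℕ∞) ≤ ringKrullDim (A ⧸ pA) := IH _ hy
    have hker : RingHom.ker (Ideal.Quotient.mk pA) ≠ ⊥ := by
      rw [Ideal.mk_ker]; exact hpA0
    have hfin := my_dim_succ_le (Ideal.Quotient.mk pA) Ideal.Quotient.mk_surjective hker hdle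
    exact_mod_cast hfin

end Auxiliary

/-- Let `P` be an ideal of `K[X_1,...,X_n]` and `u ⊆ {X_1,...,X_n}` a maximal
independent set with respect to `P` (i.e., `P ∩ K[u] = 0` and `|u| = dim K[X]/P`). Then `P`
is prime if and only if the extension `P·K(u)[X∖u]` is a maximal ideal of `K(u)[X∖u]` and
`P` equals the contraction `P·K(u)[X∖u] ∩ K[X]`.  Here `K(u)[X∖u]` is realized as the
localization of `K[X]` at the multiplicative set `S = K[u] ∖ {0}`. -/
theorem stmt_0 {K : Type*} [Field K] {n : ℕ} (P : Ideal (MvPolynomial (Fin n) K))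
    (u : Finset (Fin n))
    (hindep : ∀ p ∈ MvPolynomial.supported K (↑u : Set (Fin n)), p ∈ P → p = 0)
    (hmax : ringKrullDim (MvPolynomial (Fin n) K ⧸ P) = u.card) :
    P.IsPrime ↔
      (Ideal.map (algebraMap (MvPolynomial (Fin n) K) (Localization (suppSubmonoid (K := K) u)))
          P).IsMaximal ∧
        P = Ideal.comap (algebraMap (MvPolynomial (Fin n) K) (Localization (suppSubmonoid (K := K) u)))
              (Ideal.map
                (algebraMap (MvPolynomial (Fin n) K) (Localization (suppSubmonoid (K := K) u))) P) := by
  classical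
  set S := suppSubmonoid (K := K) u with hS
  set Λ := Localization S with hΛ
  constructor
  · intro hP
    have hdisj : Disjoint (S : Set (MvPolynomial (Fin n) K)) (P : Set (MvPolynomial (Fin n) K)) := by
      rw [Set.disjoint_left]
      rintro p ⟨hps, hp0⟩ hpP
      exact hp0 (hindep p hps hpP)
    have hcontr : P = Ideal.comap (algebraMap _ Λ) (Ideal.map (algebraMap _ Λ) P) :=
      (IsLocalization.comap_map_of_isPrime_disjoint S Λ hP hdisj).symm
    refine ⟨?_, hcontr⟩
    haveI hmapprime : (Ideal.map (algebraMap _ Λ) P).IsPrime :=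
      IsLocalization.isPrime_of_isPrime_disjoint S Λ P hP hdisj
    refine ⟨⟨hmapprime.ne_top, ?_⟩⟩
    intro J hJ
    by_contra hJtop
    obtain ⟨m, hm, hJm⟩ := Ideal.exists_le_maximal J hJtop
    haveI := hm.isPrime
    set Q := Ideal.comap (algebraMap (MvPolynomial (Fin n) K) Λ) m with hQ
    haveI hQp : Q.IsPrime := Ideal.IsPrime.comap _
    have hQdisj : Disjoint (S : Set (MvPolynomial (Fin n) K)) (Q : Set (MvPolynomial (Fin n) K)) :=
      ((IsLocalization.isPrime_iff_isPrime_disjoint S Λ m).mp hm.isPrime).2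
    have hPQ : P < Q := by
      have hle : P ≤ Q := by
        rw [hcontr]
        exact Ideal.comap_mono (le_trans (le_of_lt hJ) hJm)
      refine lt_of_le_of_ne hle fun he => ?_
      have hmm : Ideal.map (algebraMap _ Λ) P = m := by
        rw [he, hQ]
        exact IsLocalization.map_comap S Λ m
      exact lt_irrefl m (lt_of_lt_of_le (hmm ▸ hJ) hJm)
    -- an algebraically independent family of size `u.card` in the quotient by `Q`
    let e : Fin u.card → Fin n := fun i => (u.equivFin.symm i : Fin n)
    have he : Function.Injective e := fun i j hij => by
      apply u.equivFin.symm.injective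
      exact Subtype.ext hij
    let y : Fin u.card → MvPolynomial (Fin n) K ⧸ Q := fun i => Ideal.Quotient.mk Q (X (e i))
    haveI : Algebra.FiniteType K (MvPolynomial (Fin n) K) := inferInstance
    haveI : Algebra.FiniteType K (MvPolynomial (Fin n) K ⧸ Q) :=
      Algebra.FiniteType.of_surjective (Ideal.Quotient.mkₐ K Q)
        (Ideal.Quotient.mkₐ_surjective K Q)
    have hy : AlgebraicIndependent K y := by
      rw [algebraicIndependent_iff]
      intro f hf
      have hcomm : aeval y f = Ideal.Quotient.mkₐ K Q (aeval (fun i => X (e i)) f) := by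
        rw [MvPolynomial.comp_aeval_apply]
        rfl
      have hg : rename e f ∈ Q := by
        have : (rename e f : MvPolynomial (Fin n) K) = aeval (fun i => X (e i)) f := by rw [rename_eq_aeval]; rfl
        rw [this]
        rw [hcomm] at hf
        exact Ideal.Quotient.eq_zero_iff_mem.mp hf
      have hsup : rename e f ∈ MvPolynomial.supported K (↑u : Set (Fin n)) := by
        rw [supported_eq_range_rename]
        refine ⟨rename (fun i => (⟨e i, by simp [e]⟩ : (↑u : Set (Fin n)))) f, ?_⟩
        show rename Subtype.val (rename (fun i => (⟨e i, by simp [e]⟩ : (↑u : Set (Fin n)))) f)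
          = rename e f
        rw [rename_rename]
        rfl
      have h0 : rename e f = 0 := by
        by_contra hne
        exact Set.disjoint_left.mp hQdisj (⟨hsup, hne⟩ : rename e f ∈ S) hg
      exact rename_injective e he (by rw [h0, map_zero])
    have hdim : (u.card : WithBot ℕ∞) ≤ ringKrullDim (MvPolynomial (Fin n) K ⧸ Q) :=
      le_ringKrullDim_of_algIndep u.card y hy
    -- lift a chain of primes, contradicting `dim K[X]/P = u.card`
    have hlePQ : P ≤ Q := hPQ.le
    have hsurj : Function.Surjective (Ideal.Quotient.factor hlePQ) := by
      rintro b
      obtain ⟨r, rfl⟩ := Ideal.Quotient.mk_surjective b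
      exact ⟨Ideal.Quotient.mk P r, Ideal.Quotient.factor_mk hlePQ r⟩
    have hker : RingHom.ker (Ideal.Quotient.factor hlePQ) ≠ ⊥ := by
      obtain ⟨q, hqQ, hqP⟩ := SetLike.exists_of_lt hPQ
      intro hbot
      have h1 : Ideal.Quotient.mk P q ∈ RingHom.ker (Ideal.Quotient.factor hlePQ) := by
        rw [RingHom.mem_ker, Ideal.Quotient.factor_mk]
        exact Ideal.Quotient.eq_zero_iff_mem.mpr hqQ
      rw [hbot, Ideal.mem_bot] at h1
      exact hqP (Ideal.Quotient.eq_zero_iff_mem.mp h1)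
    have hfin := my_dim_succ_le (Ideal.Quotient.factor hlePQ) hsurj hker hdim
    rw [hmax] at hfin
    have : u.card + 1 ≤ u.card := by exact_mod_cast hfin
    omega
  · rintro ⟨hmaxl, hcontr⟩
    rw [hcontr]
    haveI := hmaxl.isPrime
    exact Ideal.IsPrime.comap _
end

section
/- Let I be an ideal of a commutative ring R and h ∈ R such that I : ⟨h^m⟩ = I : ⟨h^∞⟩ for some m ≥ 1. Then I = (I : ⟨h^m⟩) ∩ (I + ⟨h^m⟩). -/
/-- Let `I` be an ideal of a commutative ring `R` and `h ∈ R` such that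
`I : ⟨h^m⟩ = I : ⟨h^∞⟩` for some `m ≥ 1`. Then `I = (I : ⟨h^m⟩) ∩ (I + ⟨h^m⟩)`.
Here `I : ⟨h^m⟩ = {g : h^m * g ∈ I}` and the saturation `I : ⟨h^∞⟩ = ⋃_k (I : ⟨h^k⟩)`. -/
theorem stmt_5 {R : Type*} [CommRing R] (I : Ideal R) (h : R) (m : ℕ) (hm : 1 ≤ m)
    (hsat : ∀ g : R, h ^ m * g ∈ I ↔ ∃ k : ℕ, h ^ k * g ∈ I) :
    I = Submodule.colon I (Ideal.span {h ^ m}) ⊓ (I ⊔ Ideal.span {h ^ m}) := by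
  apply le_antisymm
  · intro x hx
    refine ⟨Submodule.mem_colon.mpr ?_, Submodule.mem_sup_left hx⟩
    intro r hr
    rw [SetLike.mem_coe, Ideal.mem_span_singleton] at hr
    obtain ⟨c, rfl⟩ := hr
    simpa [mul_comm, mul_assoc, mul_left_comm] using I.mul_mem_left (h ^ m * c) hx
  · rintro x ⟨hcol, hsum⟩
    obtain ⟨i, hi, y, hy, rfl⟩ := Submodule.mem_sup.mp hsum
    rw [Ideal.mem_span_singleton] at hy
    obtain ⟨r, rfl⟩ := hy
    have hmx : h ^ m * (i + h ^ m * r) ∈ I := by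
      have := Submodule.mem_colon.mp hcol (h ^ m) (Ideal.mem_span_singleton_self _)
      simpa [smul_eq_mul, mul_comm] using this
    have h2m : h ^ m * (h ^ m * r) ∈ I := by
      have := I.sub_mem hmx (I.mul_mem_left (h ^ m) hi)
      simpa [mul_add] using this
    have : h ^ m * r ∈ I := (hsat r).mpr ⟨2 * m, by
      rw [two_mul, pow_add]; simpa [mul_assoc] using h2m⟩
    exact I.add_mem hi this
end

section
/- Let I ⊆ K[X] be an ideal with maximal independent set u, and let I_0 = ⟨g_1,...,g_r⟩ ⊆ I where {g_1,...,g_r} ⊆ I is a Gröbner basis of I·K(u)[X∖u]. Let c ∈ K[u] be the lcm of the leading coefficients of the g_i viewed in K(u)[X∖u]. Then I_0 : ⟨c^∞⟩ = I : ⟨c^∞⟩. -/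
open MvPolynomial

noncomputable section

/-- The saturation `I : ⟨f^∞⟩ = {g : f^m * g ∈ I for some m ≥ 0}`, as an ideal. -/
def Ideal.satur {R : Type*} [CommRing R] (I : Ideal R) (f : R) : Ideal R where
  carrier := {g | ∃ m : ℕ, f ^ m * g ∈ I}
  zero_mem' := ⟨0, by simp⟩
  add_mem' := by
    rintro a b ⟨m, hm⟩ ⟨k, hk⟩
    refine ⟨m + k, ?_⟩
    have : f ^ (m + k) * (a + b) = f ^ k * (f ^ m * a) + f ^ m * (f ^ k * b) := by ring
    rw [this]
    exact add_mem (Ideal.mul_mem_left _ _ hm) (Ideal.mul_mem_left _ _ hk)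
  smul_mem' := by
    rintro c a ⟨m, hm⟩
    refine ⟨m, ?_⟩
    have : f ^ m * (c • a) = c * (f ^ m * a) := by simp [smul_eq_mul]; ring
    rw [this]
    exact Ideal.mul_mem_left _ _ hm

variable {K : Type} [Field K] {τ υ : Type} [Fintype τ] [Fintype υ]

/-- The degree (leading exponent) of a multivariate polynomial with respect to a monomial
order `m`. -/
def mdeg {S : Type*} [CommSemiring S] (m : MonomialOrder τ) (p : MvPolynomial τ S) :
    τ →₀ ℕ :=
  m.toSyn.symm (p.support.sup fun d => m.toSyn d)

/-- The leading coefficient of a multivariate polynomial with respect to a monomial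
order `m`. -/
def lCoeff {S : Type*} [CommSemiring S] (m : MonomialOrder τ) (p : MvPolynomial τ S) : S :=
  p.coeff (mdeg m p)

/-- `G` is a Gröbner basis of the ideal `J` with respect to the monomial order `m`:
`G ⊆ J` and the leading terms of the elements of `G` generate the ideal of leading terms
of `J`. -/
def IsGroebnerBasis {F : Type*} [Field F] (m : MonomialOrder τ)
    (J : Ideal (MvPolynomial τ F)) (G : Set (MvPolynomial τ F)) : Prop :=
  G ⊆ (J : Set (MvPolynomial τ F)) ∧
    Ideal.span ((fun g => (monomial (mdeg m g)) (lCoeff m g)) '' G) =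
      Ideal.span ((fun g => (monomial (mdeg m g)) (lCoeff m g)) ''
        {p : MvPolynomial τ F | p ∈ J ∧ p ≠ 0})

/-- The splitting `K[X] = K[X∖u][u]`: here the variables are indexed by `τ ⊕ υ` where
`τ = X∖u` and `υ = u`, and `K[X] ≃ K[u][X∖u]` (polynomials in the variables `X∖u` with
coefficients in `A = K[u]`). -/
abbrev splitEquiv (K : Type) [Field K] (τ υ : Type) :
    MvPolynomial (τ ⊕ υ) K ≃ₐ[K] MvPolynomial τ (MvPolynomial υ K) :=
  sumAlgEquiv K τ υ

/-- The canonical map `K[X] = K[u][X∖u] → K(u)[X∖u]` where `K(u)` is the fraction field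
of `K[u]`. -/
def extMap (K : Type) [Field K] (τ υ : Type) :
    MvPolynomial (τ ⊕ υ) K →+*
      MvPolynomial τ (FractionRing (MvPolynomial υ K)) :=
  (MvPolynomial.map
      (algebraMap (MvPolynomial υ K) (FractionRing (MvPolynomial υ K)))).comp
    (splitEquiv K τ υ : MvPolynomial (τ ⊕ υ) K →+* MvPolynomial τ (MvPolynomial υ K))

section Aux

lemma Ideal.mem_satur {R : Type*} [CommRing R] {I : Ideal R} {f x : R} :
    x ∈ I.satur f ↔ ∃ m : ℕ, f ^ m * x ∈ I := Iff.rfl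

variable {σ : Type} [Fintype σ] (m' : MonomialOrder σ) {S : Type*} [CommSemiring S]

lemma toSyn_mdeg_eq_sup (p : MvPolynomial σ S) :
    m'.toSyn (mdeg m' p) = p.support.sup fun d => m'.toSyn d := by
  simp [mdeg]

lemma le_toSyn_mdeg {p : MvPolynomial σ S} {e : σ →₀ ℕ} (h : coeff e p ≠ 0) :
    m'.toSyn e ≤ m'.toSyn (mdeg m' p) := by
  rw [toSyn_mdeg_eq_sup]
  exact Finset.le_sup (mem_support_iff.2 h)

lemma mdeg_mem_support {p : MvPolynomial σ S} (h : p ≠ 0) : mdeg m' p ∈ p.support := by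
  obtain ⟨d, hd, hsup⟩ := Finset.exists_mem_eq_sup p.support (support_nonempty.2 h)
    (fun d => m'.toSyn d)
  have hh : mdeg m' p = d := by
    rw [mdeg, hsup, AddEquiv.symm_apply_apply]
  rwa [hh]

lemma lCoeff_ne_zero {p : MvPolynomial σ S} (h : p ≠ 0) : lCoeff m' p ≠ 0 :=
  mem_support_iff.1 (mdeg_mem_support m' h)

lemma toSyn_mdeg_lt {p : MvPolynomial σ S} {d : σ →₀ ℕ} (h0 : p ≠ 0)
    (hle : ∀ e, coeff e p ≠ 0 → m'.toSyn e ≤ m'.toSyn d) (hd : coeff d p = 0) :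
    m'.toSyn (mdeg m' p) < m'.toSyn d := by
  have hmem := mdeg_mem_support m' h0
  have h1 := hle _ (mem_support_iff.1 hmem)
  rcases h1.lt_or_eq with h | h
  · exact h
  · exfalso
    have heq : mdeg m' p = d := m'.toSyn.injective h
    rw [heq] at hmem
    exact mem_support_iff.1 hmem hd

lemma exists_mdeg_le {F : Type*} [CommSemiring F] (G' : Set (MvPolynomial σ F))
    {p : MvPolynomial σ F}
    (hp : p ∈ Ideal.span ((fun g => (monomial (mdeg m' g)) (lCoeff m' g)) '' G')) :
    ∀ e : σ →₀ ℕ, coeff e p ≠ 0 → ∃ g ∈ G', lCoeff m' g ≠ 0 ∧ mdeg m' g ≤ e := by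
  classical
  induction hp using Submodule.span_induction with
  | mem x hx =>
    obtain ⟨g, hg, rfl⟩ := hx
    intro e he
    rw [coeff_monomial] at he
    split_ifs at he with h
    · exact ⟨g, hg, he, h ▸ le_rfl⟩
    · exact absurd rfl he
  | zero => intro e he; simp at he
  | add x y _ _ hx hy =>
    intro e he
    rw [coeff_add] at he
    by_cases h : coeff e x = 0
    · exact hy e (by simpa [h] using he)
    · exact hx e h
  | smul r x _ hx =>
    intro e he
    rw [smul_eq_mul, coeff_mul] at he
    obtain ⟨⟨u, v⟩, huv, hne⟩ := Finset.exists_ne_zero_of_sum_ne_zero he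
    obtain ⟨g, hg, hg0, hle⟩ := hx v (right_ne_zero_of_mul hne)
    exact ⟨g, hg, hg0, hle.trans ((Finset.HasAntidiagonal.mem_antidiagonal.1 huv) ▸ self_le_add_left v u)⟩

end Aux

/-- Let `I ⊆ K[X]` be an ideal with maximal independent set `u`
(i.e. `I ∩ K[u] = 0` and `dim K[X]/I = |u|`), and let `I₀ = ⟨g_1,...,g_r⟩ ⊆ I` where
`{g_1,...,g_r} ⊆ I` is a (finite) Gröbner basis of `I·K(u)[X∖u]` with respect to a
monomial order `m` on `X∖u`. Let `c ∈ K[u]` be the lcm of the leading coefficients of the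
`g_i` viewed in `K(u)[X∖u]`. Then `I₀ : ⟨c^∞⟩ = I : ⟨c^∞⟩`. -/
theorem stmt_14 (m : MonomialOrder τ) (I : Ideal (MvPolynomial (τ ⊕ υ) K))
    (G : Finset (MvPolynomial (τ ⊕ υ) K)) (hGI : ∀ g ∈ G, g ∈ I)
    (hindep : ∀ q : MvPolynomial υ K, (splitEquiv K τ υ).symm (C q) ∈ I → q = 0)
    (hdim : ringKrullDim (MvPolynomial (τ ⊕ υ) K ⧸ I) = Fintype.card υ)
    (hGB : IsGroebnerBasis m (Ideal.map (extMap K τ υ) I)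
      ((extMap K τ υ) '' (↑G : Set _)))
    (c : MvPolynomial υ K)
    (hlcm : (∀ g ∈ G, lCoeff m ((splitEquiv K τ υ) g) ∣ c) ∧
      ∀ d : MvPolynomial υ K, (∀ g ∈ G, lCoeff m ((splitEquiv K τ υ) g) ∣ d) → c ∣ d) :
    (Ideal.span (↑G : Set (MvPolynomial (τ ⊕ υ) K))).satur
        ((splitEquiv K τ υ).symm (C c)) =
      I.satur ((splitEquiv K τ υ).symm (C c)) := by
  classical
  obtain ⟨hdvd, -⟩ := hlcm
  set c' : MvPolynomial (τ ⊕ υ) K := (splitEquiv K τ υ).symm (C c) with hc'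
  have hφinj : Function.Injective
      (algebraMap (MvPolynomial υ K) (FractionRing (MvPolynomial υ K))) :=
    IsFractionRing.injective _ _
  have hext : ∀ f : MvPolynomial (τ ⊕ υ) K,
      extMap K τ υ f = MvPolynomial.map (algebraMap _ _) ((splitEquiv K τ υ) f) :=
    fun f => rfl
  have hmdeg_ext : ∀ f, mdeg m (extMap K τ υ f) = mdeg m ((splitEquiv K τ υ) f) := by
    intro f
    rw [hext]
    unfold mdeg
    rw [support_map_of_injective _ hφinj]
  have hlc_ext : ∀ f, lCoeff m (extMap K τ υ f) =
      algebraMap _ _ (lCoeff m ((splitEquiv K τ υ) f)) := by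
    intro f
    rw [lCoeff, lCoeff, hmdeg_ext, hext, coeff_map]
  have key : ∀ s : m.syn, ∀ f : MvPolynomial (τ ⊕ υ) K, f ∈ I →
      m.toSyn (mdeg m ((splitEquiv K τ υ) f)) = s →
      ∃ N : ℕ, c' ^ N * f ∈ Ideal.span (↑G : Set (MvPolynomial (τ ⊕ υ) K)) := by
    intro s
    induction s using WellFoundedLT.induction with
    | _ s IH =>
    intro f hfI hfs
    by_cases hf0 : f = 0
    · exact ⟨0, by simp [hf0]⟩
    have hsplitf0 : (splitEquiv K τ υ) f ≠ 0 := by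
      intro h
      apply hf0
      have h2 := congrArg (splitEquiv K τ υ).symm h
      rwa [AlgEquiv.symm_apply_apply, map_zero] at h2
    have hextf0 : extMap K τ υ f ≠ 0 := by
      rw [hext]
      intro h
      exact hsplitf0 (MvPolynomial.map_injective _ hφinj (by rw [h, map_zero]))
    have hJ : extMap K τ υ f ∈ Ideal.map (extMap K τ υ) I := Ideal.mem_map_of_mem _ hfI
    have hLT : (monomial (mdeg m (extMap K τ υ f))) (lCoeff m (extMap K τ υ f)) ∈
        Ideal.span ((fun g => (monomial (mdeg m g)) (lCoeff m g)) ''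
          ((extMap K τ υ) '' (↑G : Set _))) := by
      rw [hGB.2]
      exact Ideal.subset_span ⟨extMap K τ υ f, ⟨hJ, hextf0⟩, rfl⟩
    obtain ⟨g', hg'mem, hg'lc, hg'le⟩ := exists_mdeg_le m _ hLT (mdeg m (extMap K τ υ f))
      (by rw [coeff_monomial, if_pos rfl]; exact lCoeff_ne_zero m hextf0)
    obtain ⟨g, hgG, rfl⟩ := hg'mem
    have hgG' : g ∈ G := hgG
    set p := (splitEquiv K τ υ) f with hp
    set q := (splitEquiv K τ υ) g with hq
    set d := mdeg m p with hd
    set e := mdeg m q with he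
    have hed : e ≤ d := by
      rw [he, hd, hp, hq, ← hmdeg_ext, ← hmdeg_ext]
      exact hg'le
    set a := lCoeff m p with ha
    set b := lCoeff m q with hb
    have hb0 : b ≠ 0 := by
      intro h
      apply hg'lc
      rw [hlc_ext, ← hq, ← hb, h, map_zero]
    have ha0 : a ≠ 0 := lCoeff_ne_zero m hsplitf0
    set h := C b * p - monomial (d - e) a * q with hh
    have hcda : coeff d p = a := rfl
    have hceb : coeff e q = b := rfl
    have hcoeffd : coeff d h = 0 := by
      rw [hh, coeff_sub, coeff_C_mul, coeff_monomial_mul', if_pos tsub_le_self,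
        tsub_tsub_cancel_of_le hed, hcda, hceb, mul_comm, sub_self]
    have hbound : ∀ e', coeff e' h ≠ 0 → m.toSyn e' ≤ m.toSyn d := by
      intro e' he'
      by_contra hlt
      push_neg at hlt
      apply he'
      rw [hh, coeff_sub, coeff_C_mul, coeff_monomial_mul']
      have h1 : coeff e' p = 0 := by
        by_contra h1
        exact absurd (le_toSyn_mdeg m h1) (not_le.2 hlt)
      rw [h1, mul_zero, zero_sub, neg_eq_zero]
      split_ifs with hcase
      · have h2 : coeff (e' - (d - e)) q = 0 := by
          by_contra h2
          have h3 := le_toSyn_mdeg m h2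
          have heq : e' - (d - e) + (d - e) = e' := tsub_add_cancel_of_le hcase
          have h4 : m.toSyn e' ≤ m.toSyn d := by
            calc m.toSyn e' = m.toSyn (e' - (d - e)) + m.toSyn (d - e) := by
                  rw [← map_add, heq]
              _ ≤ m.toSyn e + m.toSyn (d - e) := add_le_add_left h3 _
              _ = m.toSyn (e + (d - e)) := (map_add _ _ _).symm
              _ = m.toSyn d := by rw [add_tsub_cancel_of_le hed]
          exact absurd h4 (not_le.2 hlt)
        rw [h2, mul_zero]
      · rfl
    set f1 := (splitEquiv K τ υ).symm h with hf1
    have hsplitf1 : (splitEquiv K τ υ) f1 = h := (splitEquiv K τ υ).apply_symm_apply h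
    have hf1eq : f1 = (splitEquiv K τ υ).symm (C b) * f -
        (splitEquiv K τ υ).symm (monomial (d - e) a) * g := by
      rw [hf1, hh, map_sub, map_mul, map_mul, hp, hq, AlgEquiv.symm_apply_apply,
        AlgEquiv.symm_apply_apply]
    have hf1I : f1 ∈ I := by
      rw [hf1eq]
      exact sub_mem (I.mul_mem_left _ hfI) (I.mul_mem_left _ (hGI g hgG'))
    have hstep : ∃ N, c' ^ N * f1 ∈ Ideal.span (↑G : Set (MvPolynomial (τ ⊕ υ) K)) := by
      by_cases hh0 : h = 0
      · exact ⟨0, by simp [hf1, hh0]⟩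
      · exact IH _ (hfs ▸ (hsplitf1 ▸ toSyn_mdeg_lt m hh0 hbound hcoeffd :
            m.toSyn (mdeg m ((splitEquiv K τ υ) f1)) < m.toSyn d)) f1 hf1I rfl
    obtain ⟨N, hN⟩ := hstep
    obtain ⟨u, huc⟩ := hdvd g hgG'
    refine ⟨N + 1, ?_⟩
    have hbf : (splitEquiv K τ υ).symm (C b) * f =
        f1 + (splitEquiv K τ υ).symm (monomial (d - e) a) * g := by
      rw [hf1eq]; ring
    have hc'eq : c' = (splitEquiv K τ υ).symm (C b) * (splitEquiv K τ υ).symm (C u) := by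
      rw [hc', huc, C_mul, map_mul]
    have hmem : c' ^ N * ((splitEquiv K τ υ).symm (C b) * f) ∈
        Ideal.span (↑G : Set (MvPolynomial (τ ⊕ υ) K)) := by
      rw [hbf, mul_add]
      refine Ideal.add_mem _ hN ?_
      exact Ideal.mul_mem_left _ _
        (Ideal.mul_mem_left _ _ (Ideal.subset_span (Finset.mem_coe.2 hgG')))
    have hrw : c' ^ (N + 1) * f =
        (splitEquiv K τ υ).symm (C u) * (c' ^ N * ((splitEquiv K τ υ).symm (C b) * f)) := by
      rw [pow_succ, hc'eq]; ring
    rw [hrw]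
    exact Ideal.mul_mem_left _ _ hmem
  ext x
  rw [Ideal.mem_satur, Ideal.mem_satur]
  constructor
  · rintro ⟨N, hN⟩
    exact ⟨N, Ideal.span_le.2 (fun g hg => hGI g (Finset.mem_coe.1 hg)) hN⟩
  · rintro ⟨N, hN⟩
    obtain ⟨M, hM⟩ := key _ (c' ^ N * x) hN rfl
    exact ⟨M + N, by rw [pow_add, mul_assoc]; exact hM⟩
end
end

section
/- The set u_1 = {x_1,...,x_12, y_1,...,y_12, z_1, z_2} of 26 variables is an independent set for the determinantal hyperedge ideal I, i.e., I ∩ Q[u_1] = 0. -/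
open MvPolynomial

noncomputable section

/-- The polynomial ring `ℚ[x_1,…,x_12, y_1,…,y_12, z_1,…,z_12]`: the variable indexed by
`(j, i) : Fin 3 × Fin 12` is the entry of the generic 3×12 matrix `M` in row `j`
(row `0` = `x`, row `1` = `y`, row `2` = `z`) and column `i`. -/
abbrev R36 : Type := MvPolynomial (Fin 3 × Fin 12) ℚ

/-- The 3×3 minor `[N|B]` of the generic 3×12 matrix, where the columns of `B` are
`c 0, c 1, c 2`. -/
def minor (c : Fin 3 → Fin 12) : R36 :=
  Matrix.det (Matrix.of fun j k : Fin 3 => X (j, c k))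

/-- The sixteen generators of the determinantal hyperedge ideal: the minors `[N|B]` with
`B` one of the row blocks `R_{i+1} = {3i+1, 3i+2, 3i+3}` (0-based: `{3i, 3i+1, 3i+2}`),
or `B` a 3-element subset (given by a strictly monotone `f : Fin 3 → Fin 4`) of one of the
column blocks `C_{j+1} = {j+1, j+4, j+7, j+10}` (0-based: `{j, j+3, j+6, j+9}`). -/
def hyperedgeGens : Set R36 :=
  {p | (∃ i : Fin 4, p = minor fun k => ⟨3 * i.1 + k.1, by have := i.2; have := k.2; omega⟩) ∨
       (∃ j : Fin 3, ∃ f : Fin 3 → Fin 4, StrictMono f ∧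
          p = minor fun k => ⟨j.1 + 3 * (f k).1, by have := j.2; have := (f k).2; omega⟩)}

/-- The determinantal hyperedge ideal `I`. -/
def hyperedgeIdeal : Ideal R36 := Ideal.span hyperedgeGens

/-- The set `u₁ = {x_1,…,x_12, y_1,…,y_12, z_1, z_2}` of 26 variables (0-based: the
`z`-variables are those with row index `2`, and `z_1, z_2` have column indices `0, 1`). -/
def u1 : Set (Fin 3 × Fin 12) :=
  {v | v.1 = 0 ∨ v.1 = 1 ∨ (v.1 = 2 ∧ (v.2 = 0 ∨ v.2 = 1))}


abbrev K36 : Type := FractionRing R36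

def ι : R36 →+* K36 := algebraMap R36 K36

def dd : K36 := ι (X (0,0)) * ι (X (1,1)) - ι (X (0,1)) * ι (X (1,0))

def aa : K36 := (ι (X (2,0)) * ι (X (1,1)) - ι (X (2,1)) * ι (X (1,0))) / dd
def bb : K36 := (ι (X (0,0)) * ι (X (2,1)) - ι (X (0,1)) * ι (X (2,0))) / dd

def fsub : Fin 3 × Fin 12 → K36 := fun v =>
  if v.1 = 2 then aa * ι (X (0, v.2)) + bb * ι (X (1, v.2)) else ι (X v)

def φ : R36 →ₐ[ℚ] K36 := aeval fsub

lemma dd_ne : dd ≠ 0 := by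
  have h : (X (0,0) * X (1,1) - X (0,1) * X (1,0) : R36) ≠ 0 := by
    intro h
    have := congrArg (eval (fun v : Fin 3 × Fin 12 => if v = (0,0) ∨ v = (1,1) then (1:ℚ) else 0)) h
    simp at this
  have hinj := IsFractionRing.injective R36 K36
  intro h0
  apply h
  apply hinj
  simpa [dd, ι] using h0

lemma phi_minor (c : Fin 3 → Fin 12) : φ (minor c) = 0 := by
  have hdet : φ (minor c) = Matrix.det (Matrix.of fun j k : Fin 3 => φ (X (j, c k))) := by
    simp [minor, AlgHom.map_det]
    rfl
  rw [hdet]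
  set N : Matrix (Fin 3) (Fin 3) K36 := Matrix.of fun j k : Fin 3 => φ (X (j, c k)) with hN
  have hrow : N = N.updateRow 2 (aa • N 0 + bb • N 1) := by
    ext j k
    by_cases hj : j = 2
    · subst hj
      simp [Matrix.updateRow_self, hN, φ, fsub, Pi.add_apply, Pi.smul_apply, smul_eq_mul]
    · rw [Matrix.updateRow_ne hj]
  rw [hrow, Matrix.det_updateRow_add, Matrix.det_updateRow_smul, Matrix.det_updateRow_smul]
  have h0 : (N.updateRow 2 (N 0)).det = 0 :=
    Matrix.det_zero_of_row_eq (i := 0) (j := 2) (by decide) (by simp)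
  have h1 : (N.updateRow 2 (N 1)).det = 0 :=
    Matrix.det_zero_of_row_eq (i := 1) (j := 2) (by decide) (by simp)
  rw [h0, h1]; ring

lemma phi_eq_on_u1 (p : R36) (hp : p ∈ MvPolynomial.supported ℚ u1) : φ p = ι p := by
  rw [supported_eq_adjoin_X] at hp
  induction hp using Algebra.adjoin_induction with
  | mem x hx =>
      obtain ⟨v, hv, rfl⟩ := hx
      rcases v with ⟨j, i⟩
      rcases hv with h | h | ⟨h2, hi⟩
      · obtain rfl : j = 0 := h
        simp [φ, fsub]
      · obtain rfl : j = 1 := h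
        simp [φ, fsub]
      · subst h2
        rcases hi with hi | hi <;> subst hi <;>
        · simp only [φ, fsub, aeval_X, if_pos rfl, aa, bb]
          field_simp [dd_ne]
          simp [dd, ι]
          have hd := dd_ne
          simp only [dd, ι] at hd
          rw [div_eq_iff hd]
          ring
  | algebraMap r =>
      simp only [φ, ι, AlgHom.commutes]
      rw [← IsScalarTower.algebraMap_apply ℚ R36 K36]
  | add x y _ _ hx hy => simp [map_add, hx, hy]
  | mul x y _ _ hx hy => simp [map_mul, hx, hy]

/-- the set `u₁ = {x_1,…,x_12, y_1,…,y_12, z_1, z_2}` of 26 variables is an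
independent set for the determinantal hyperedge ideal `I`, i.e., `I ∩ ℚ[u₁] = 0`. -/
theorem stmt_18 :
    ∀ p ∈ hyperedgeIdeal, p ∈ MvPolynomial.supported ℚ u1 → p = 0 := by
  intro p hpI hpS
  have h0 : φ p = 0 := by
    refine Submodule.span_induction (p := fun q _ => φ q = 0) ?_ (by simp) ?_ ?_ hpI
    · rintro x (⟨i, rfl⟩ | ⟨j, f, hf, rfl⟩) <;> exact phi_minor _
    · intro x y _ _ hx hy; simp [map_add, hx, hy]
    · intro a x _ hx; simp [smul_eq_mul, map_mul, hx]
  rw [phi_eq_on_u1 p hpS] at h0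
  exact IsFractionRing.injective R36 K36 (by simpa [ι] using h0)
end
end

section
/- Let I be a proper ideal of a Noetherian ring R and h ∈ R with h ∉ √I. Then there exists m ≥ 1 such that I : ⟨h^m⟩ = I : ⟨h^{m+k}⟩ for all k ≥ 0, i.e., the saturation I : ⟨h^∞⟩ is achieved at a finite power, and moreover I = (I : ⟨h^∞⟩) ∩ (I + ⟨h^m⟩) for this m. -/
/-- Let `I` be a proper ideal of a Noetherian ring `R` and `h ∈ R` with
`h ∉ √I`. Then there exists `m ≥ 1` such that `I : ⟨h^m⟩ = I : ⟨h^{m+k}⟩` for all `k ≥ 0`,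
i.e., the saturation `I : ⟨h^∞⟩` is achieved at a finite power, and moreover
`I = (I : ⟨h^∞⟩) ∩ (I + ⟨h^m⟩)` for this `m`. -/
theorem stmt_19 {R : Type*} [CommRing R] [IsNoetherianRing R] (I : Ideal R) (hI : I ≠ ⊤)
    (h : R) (hh : h ∉ I.radical) :
    ∃ m : ℕ, 1 ≤ m ∧
      (∀ k : ℕ, Submodule.colon I (Ideal.span {h ^ m}) =
        Submodule.colon I (Ideal.span {h ^ (m + k)})) ∧
      Submodule.colon I (Ideal.span {h ^ m}) = I.satur h ∧
      I = I.satur h ⊓ (I ⊔ Ideal.span {h ^ m}) := by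
  -- membership characterization
  have mem_colon : ∀ (n : ℕ) (r : R),
      r ∈ Submodule.colon I (Ideal.span {h ^ n}) ↔ h ^ n * r ∈ I := by
    intro n r
    rw [← Ideal.submodule_span_eq, Submodule.mem_colon_span_singleton, smul_eq_mul, mul_comm]
  -- the chain is monotone
  have mono : Monotone (fun n : ℕ => Submodule.colon I (Ideal.span {h ^ n})) := by
    intro a b hab r hr
    rw [mem_colon] at hr ⊢
    obtain ⟨c, rfl⟩ := Nat.exists_eq_add_of_le hab
    have : h ^ (a + c) * r = h ^ c * (h ^ a * r) := by rw [pow_add]; ring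
    rw [this]
    exact Ideal.mul_mem_left _ _ hr
  obtain ⟨n, hn⟩ := (monotone_stabilizes_iff_noetherian.mpr inferInstance)
    ⟨fun n : ℕ => Submodule.colon I (Ideal.span {h ^ n}), mono⟩
  set m := n + 1 with hm
  have hstab : ∀ k, n ≤ k → Submodule.colon I (Ideal.span {h ^ n})
      = Submodule.colon I (Ideal.span {h ^ k}) := hn
  have key : ∀ k : ℕ, Submodule.colon I (Ideal.span {h ^ m}) =
      Submodule.colon I (Ideal.span {h ^ (m + k)}) := by
    intro k
    rw [← hstab m (Nat.le_succ n), ← hstab (m + k) (by omega)]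
  have hsat : Submodule.colon I (Ideal.span {h ^ m}) = I.satur h := by
    apply le_antisymm
    · intro r hr
      exact ⟨m, (mem_colon m r).mp hr⟩
    · rintro r ⟨k, hk⟩
      rw [mem_colon]
      by_cases hkm : k ≤ m
      · obtain ⟨c, hc⟩ := Nat.exists_eq_add_of_le hkm
        rw [hc]
        have : h ^ (k + c) * r = h ^ c * (h ^ k * r) := by rw [pow_add]; ring
        rw [this]
        exact Ideal.mul_mem_left _ _ hk
      · have := (mem_colon k r).mpr hk
        rw [← hstab k (by omega), hstab m (Nat.le_succ n)] at this
        exact (mem_colon m r).mp this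
  refine ⟨m, Nat.le_add_left 1 n, key, hsat, le_antisymm ?_ ?_⟩
  · exact le_inf (fun x hx => ⟨0, by simpa using hx⟩) (le_sup_left.trans le_rfl)
  · rintro x ⟨hx1, hx2⟩
    rw [← hsat] at hx1
    replace hx1 := (mem_colon m x).mp hx1
    obtain ⟨i, hi, r, hr, rfl⟩ := Submodule.mem_sup.mp hx2
    obtain ⟨c, hc, rfl⟩ := Ideal.mem_span_singleton'.mp hr
    have h2 : h ^ (m + m) * c ∈ I := by
      have : h ^ m * (i + c * h ^ m) - h ^ m * i = h ^ (m + m) * c := by ring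
      rw [← this]
      exact Ideal.sub_mem _ hx1 (Ideal.mul_mem_left _ _ hi)
    have : c ∈ Submodule.colon I (Ideal.span {h ^ m}) := by
      rw [key m]; exact (mem_colon _ _).mpr h2
    rw [mem_colon] at this
    exact Ideal.add_mem _ hi (by rw [mul_comm] at this; exact this)
end
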